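/- If a board is partitioned into R Merson regions and every region that is full at the start requires at least one move originating inside it, then: if the starting vacancy is in a corner region or in no region, every solution has at least R moves; if the starting vacancy is in a non-corner region, every solution has at least R - 1 moves. -/
import Mathlib


/-- Merson-region lower bound.  A solution has `M` moves; `origin m` is the
hole from which the first jump of move `m` originates.  The board carries `R`
pairwise disjoint Merson regions, indexed by `ι`, each of which (when full at
the start) must contain the origin of some move.  Then:
* if the starting vacancy is in a corner region or in no region (so every
  region requires a move out of it), every solution has at least `R` moves;
* if the starting vacancy is in a non-corner region `r₀` (so every region
  other than `r₀` requires a move out of it), every solution has at least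
  `R - 1` moves. -/
theorem merson_region_bound {Hole ι : Type*} [Fintype ι] [DecidableEq ι]
    (R M : ℕ) (hR : Fintype.card ι = R)
    (region : ι → Set Hole)
    (hdisj : Pairwise (Function.onFun Disjoint region))
    (origin : Fin M → Hole) :
    ((∀ r : ι, ∃ m : Fin M, origin m ∈ region r) → R ≤ M) ∧
      (∀ r₀ : ι, (∀ r : ι, r ≠ r₀ → ∃ m : Fin M, origin m ∈ region r) →
        R - 1 ≤ M) := by
  constructor
  · intro h
    choose f hf using h
    have hinj : Function.Injective f := by
      intro a b hab
      by_contra hne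
      exact (hdisj hne).le_bot ⟨hf a, hab ▸ hf b⟩
    have := Fintype.card_le_of_injective f hinj
    simpa [hR] using this
  · intro r₀ h
    choose f hf using fun r : {r : ι // r ≠ r₀} => h r r.2
    have hinj : Function.Injective f := by
      intro a b hab
      by_contra hne
      have hne' : (a : ι) ≠ (b : ι) := fun e => hne (Subtype.ext e)
      exact (hdisj hne').le_bot ⟨hf a, hab ▸ hf b⟩
    have hc := Fintype.card_le_of_injective f hinj
    have : Fintype.card {r : ι // r ≠ r₀} = R - 1 := by
      rw [Fintype.card_subtype_compl, hR]
      simp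
    simp only [Fintype.card_fin] at hc
    omega
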